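/- arXiv:2104.13166 — 3 statements merged into one kernel-verified Lean document; each statement's English description precedes it below -/
import Mathlib

section
/- If Q ∈ ℝ^{n×n} is skew-symmetric and P ∈ ℝ^{n×n} is symmetric positive definite, then the matrix PQ is diagonalizable over ℂ. -/
open Matrix
theorem posdef_mul_skew_diagonalizable (n : ℕ)
    (Q P : Matrix (Fin n) (Fin n) ℝ)
    (hQ : Qᵀ = -Q) (hP : P.PosDef) :
    ∃ (S : Matrix (Fin n) (Fin n) ℂ) (d : Fin n → ℂ),
      IsUnit S ∧ (P * Q).map (Complex.ofReal) = S * Matrix.diagonal d * S⁻¹ := by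
  classical
  set R : Matrix (Fin n) (Fin n) ℝ := (open scoped MatrixOrder in CFC.sqrt P) with hRdef
  have hR2 : R * R = P := by open scoped MatrixOrder in exact CFC.sqrt_mul_sqrt_self P hP.posSemidef.nonneg
  have hRsym : Rᵀ = R := by open scoped MatrixOrder in exact (CFC.sqrt_nonneg P).posSemidef.1
  have hRunit : IsUnit R := by
    have hdet : R.det * R.det = P.det := by rw [← Matrix.det_mul, hR2]
    have : R.det ≠ 0 := by
      intro h
      have := hP.det_pos
      rw [← hdet, h, mul_zero] at this
      exact lt_irrefl _ this
    exact (Matrix.isUnit_iff_isUnit_det R).mpr (Ne.isUnit this)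
  set B : Matrix (Fin n) (Fin n) ℝ := R * Q * R with hBdef
  have hBskew : Bᵀ = -B := by
    rw [hBdef, Matrix.transpose_mul, Matrix.transpose_mul, hQ, hRsym]
    simp [mul_assoc]
  -- move to ℂ
  let f : ℝ →+* ℂ := Complex.ofRealHom
  have hmap : ∀ (M N : Matrix (Fin n) (Fin n) ℝ),
      (M * N).map Complex.ofReal = M.map Complex.ofReal * N.map Complex.ofReal := fun M N =>
    Matrix.map_mul (f := f)
  set Bc : Matrix (Fin n) (Fin n) ℂ := B.map Complex.ofReal with hBcdef
  have hBcH : Bcᴴ = -Bc := by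
    have : Bcᴴ = Bᵀ.map Complex.ofReal := by
      ext i j
      exact Complex.conj_ofReal _
    rw [this, hBskew, hBcdef]
    ext i j
    simp [Matrix.map_apply]
  have hH : (Complex.I • Bc).IsHermitian := by
    unfold Matrix.IsHermitian
    rw [Matrix.conjTranspose_smul, hBcH]
    simp
  set U : Matrix (Fin n) (Fin n) ℂ := (hH.eigenvectorUnitary : Matrix (Fin n) (Fin n) ℂ) with hUdef
  have hUmem := hH.eigenvectorUnitary.2
  have hU1 : star U * U = 1 := hUmem.1
  have hU2 : U * star U = 1 := hUmem.2
  have hspec : Complex.I • Bc = U * Matrix.diagonal (RCLike.ofReal ∘ hH.eigenvalues) * star U :=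
    hH.spectral_theorem
  set d : Fin n → ℂ := fun i => -Complex.I * (hH.eigenvalues i : ℂ) with hddef
  have hBc : Bc = U * Matrix.diagonal d * star U := by
    have h1 : Bc = (-Complex.I) • (Complex.I • Bc) := by
      rw [smul_smul]
      norm_num [Complex.I_mul_I]
    have hd : Matrix.diagonal d =
        (-Complex.I) • Matrix.diagonal (RCLike.ofReal ∘ hH.eigenvalues) := by
      rw [← Matrix.diagonal_smul]
      rfl
    rw [h1, hspec, hd, Matrix.mul_smul, Matrix.smul_mul]
  set Rc : Matrix (Fin n) (Fin n) ℂ := R.map Complex.ofReal with hRcdef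
  have hRcunit : IsUnit Rc := hRunit.map f.mapMatrix
  have hUunit : IsUnit U := by
    refine (Matrix.isUnit_iff_isUnit_det U).mpr (IsUnit.of_mul_eq_one (star U).det ?_)
    rw [← Matrix.det_mul, hU2, Matrix.det_one]
  refine ⟨Rc * U, d, hRcunit.mul hUunit, ?_⟩
  set S : Matrix (Fin n) (Fin n) ℂ := Rc * U with hSdef
  have hSunit : IsUnit S := hRcunit.mul hUunit
  have hAS : (P * Q).map Complex.ofReal * S = S * Matrix.diagonal d := by
    have hPQ : (P * Q).map Complex.ofReal * Rc = Rc * Bc := by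
      rw [hRcdef, hBcdef, ← hmap, ← hmap]
      rw [hBdef, ← hR2]
      simp only [mul_assoc]
    calc (P * Q).map Complex.ofReal * S = ((P * Q).map Complex.ofReal * Rc) * U := by
          rw [hSdef, mul_assoc]
      _ = Rc * Bc * U := by rw [hPQ]
      _ = Rc * (U * Matrix.diagonal d * star U) * U := by rw [hBc]
      _ = Rc * U * Matrix.diagonal d * (star U * U) := by simp only [mul_assoc]
      _ = S * Matrix.diagonal d := by rw [hU1, mul_one, hSdef]
  have hSdet : IsUnit S.det := (Matrix.isUnit_iff_isUnit_det S).mp hSunit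
  rw [← hAS, mul_assoc, Matrix.mul_nonsing_inv S hSdet, mul_one]
end

section
/- If Q ∈ ℝ^{n×n} is skew-symmetric, P ∈ ℝ^{n×n} is symmetric positive definite, λ ∈ ℂ is an eigenvalue of PQ with eigenvector x ≠ 0, and z satisfies (PQ - λI)z = x, then a contradiction follows; equivalently, PQ has no nontrivial Jordan blocks: ker((PQ - λI)²) = ker(PQ - λI) for every eigenvalue λ. -/
open Matrix Complex

lemma posdef_map_dotProduct_ne_zero {n : ℕ} {M : Matrix (Fin n) (Fin n) ℝ}
    (hM : M.PosDef) {w : Fin n → ℂ} (hw : w ≠ 0) :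
    star w ⬝ᵥ (M.map Complex.ofReal) *ᵥ w ≠ 0 := by
  set u : Fin n → ℝ := fun i => (w i).re with hu
  set v : Fin n → ℝ := fun i => (w i).im with hv
  have key : (star w ⬝ᵥ (M.map Complex.ofReal) *ᵥ w).re
      = star u ⬝ᵥ M *ᵥ u + star v ⬝ᵥ M *ᵥ v := by
    simp only [dotProduct, Matrix.mulVec, Matrix.map_apply, Pi.star_apply,
      Complex.re_sum, Finset.mul_sum]
    rw [← Finset.sum_add_distrib]
    refine Finset.sum_congr rfl fun i _ => ?_
    rw [← Finset.sum_add_distrib]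
    refine Finset.sum_congr rfl fun j _ => ?_
    simp only [Complex.mul_re, Complex.mul_im, RCLike.star_def, Complex.conj_re,
      Complex.conj_im, Complex.ofReal_re, Complex.ofReal_im, Pi.star_apply, star_trivial]
    ring
  have huv : u ≠ 0 ∨ v ≠ 0 := by
    by_contra h
    push_neg at h
    apply hw
    funext i
    have h1 := congrFun h.1 i
    have h2 := congrFun h.2 i
    simp only [hu, hv, Pi.zero_apply] at h1 h2
    exact Complex.ext h1 h2
  have hpos : 0 < star u ⬝ᵥ M *ᵥ u + star v ⬝ᵥ M *ᵥ v := by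
    rcases huv with h | h
    · exact add_pos_of_pos_of_nonneg (hM.dotProduct_mulVec_pos h) (hM.posSemidef.dotProduct_mulVec_nonneg v)
    · exact add_pos_of_nonneg_of_pos (hM.posSemidef.dotProduct_mulVec_nonneg u) (hM.dotProduct_mulVec_pos h)
  intro h0
  rw [h0] at key
  simp only [Complex.zero_re] at key
  rw [← key] at hpos
  exact lt_irrefl _ hpos

theorem posdef_mul_skew_no_jordan_blocks (n : ℕ)
    (Q P : Matrix (Fin n) (Fin n) ℝ)
    (hQ : Qᵀ = -Q) (hP : P.PosDef)
    (lam : ℂ)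
    (hev : ∃ x : Fin n → ℂ, x ≠ 0 ∧
      ((P * Q).map (Complex.ofReal)).mulVec x = lam • x) :
    ∀ z : Fin n → ℂ,
      (((P * Q).map (Complex.ofReal) - lam • (1 : Matrix (Fin n) (Fin n) ℂ)) ^ 2).mulVec z = 0 →
      ((P * Q).map (Complex.ofReal) - lam • (1 : Matrix (Fin n) (Fin n) ℂ)).mulVec z = 0 := by
  intro z hz
  set A : Matrix (Fin n) (Fin n) ℂ := (P * Q).map Complex.ofReal with hA
  set M : Matrix (Fin n) (Fin n) ℂ := (P⁻¹).map Complex.ofReal with hMdef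
  have hPsymm : Pᵀ = P := hP.isHermitian
  have hdet : IsUnit P.det := (Matrix.isUnit_iff_isUnit_det P).mp hP.isUnit
  have h1 : P * P⁻¹ = 1 := Matrix.mul_nonsing_inv P hdet
  have h2 : P⁻¹ * P = 1 := Matrix.nonsing_inv_mul P hdet
  have hreal : (P * Q)ᵀ * P⁻¹ = -(P⁻¹ * (P * Q)) := by
    rw [Matrix.transpose_mul, hQ, hPsymm, Matrix.mul_assoc, h1, Matrix.mul_one,
      ← Matrix.mul_assoc, h2, Matrix.one_mul]
  have hmapmul : ∀ (X Y : Matrix (Fin n) (Fin n) ℝ),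
      (X * Y).map Complex.ofReal = X.map Complex.ofReal * Y.map Complex.ofReal := fun X Y => by
    ext i j
    simp [Matrix.mul_apply, Matrix.map_apply]
  have hAH : Aᴴ = ((P * Q)ᵀ).map Complex.ofReal := by
    ext i j
    simp [hA, Matrix.conjTranspose_apply, Matrix.map_apply, Complex.conj_ofReal,
      Matrix.mul_apply, mul_comm]
  have hC : Aᴴ * M = -(M * A) := by
    rw [hAH, hMdef, hA, ← hmapmul, ← hmapmul, hreal]
    ext i j
    simp [Matrix.map_apply]
  -- set up w
  set B : Matrix (Fin n) (Fin n) ℂ := A - lam • (1 : Matrix (Fin n) (Fin n) ℂ) with hB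
  set w : Fin n → ℂ := B.mulVec z with hwdef
  show w = 0
  by_contra hw0
  have hBw : B.mulVec w = 0 := by
    have : (B * B).mulVec z = 0 := by rw [← pow_two]; exact hz
    rw [← Matrix.mulVec_mulVec] at this
    exact this
  have hAw : A.mulVec w = lam • w := by
    have : A.mulVec w - lam • w = 0 := by
      rw [← hBw, hB, Matrix.sub_mulVec, Matrix.smul_mulVec, Matrix.one_mulVec]
    linear_combination (norm := module) this
  have hAz : A.mulVec z = w + lam • z := by
    have : w = A.mulVec z - lam • z := by
      rw [hwdef, hB, Matrix.sub_mulVec, Matrix.smul_mulVec, Matrix.one_mulVec]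
    rw [this]; module
  set c : ℂ := star w ⬝ᵥ M *ᵥ w with hc
  set d : ℂ := star w ⬝ᵥ M *ᵥ z with hd
  have hcne : c ≠ 0 := posdef_map_dotProduct_ne_zero hP.inv hw0
  have key : ∀ y : Fin n → ℂ,
      star w ⬝ᵥ M *ᵥ (A *ᵥ y) = -(starRingEnd ℂ lam) * (star w ⬝ᵥ M *ᵥ y) := by
    intro y
    have hMA : M * A = -(Aᴴ * M) := by rw [hC, neg_neg]
    calc star w ⬝ᵥ M *ᵥ (A *ᵥ y) = star w ⬝ᵥ (M * A) *ᵥ y := by rw [Matrix.mulVec_mulVec]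
      _ = -(star w ⬝ᵥ (Aᴴ * M) *ᵥ y) := by rw [hMA, Matrix.neg_mulVec, dotProduct_neg]
      _ = -(star w ⬝ᵥ Aᴴ *ᵥ (M *ᵥ y)) := by rw [Matrix.mulVec_mulVec]
      _ = -((star w ᵥ* Aᴴ) ⬝ᵥ M *ᵥ y) := by rw [Matrix.dotProduct_mulVec]
      _ = -(star (A *ᵥ w) ⬝ᵥ M *ᵥ y) := by rw [← Matrix.star_mulVec]
      _ = -(star (lam • w) ⬝ᵥ M *ᵥ y) := by rw [hAw]
      _ = -(starRingEnd ℂ lam) * (star w ⬝ᵥ M *ᵥ y) := by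
          rw [star_smul, smul_dotProduct]
          simp [mul_comm]
  have eq1 : lam * c = -(starRingEnd ℂ lam) * c := by
    have := key w
    rw [hAw, Matrix.mulVec_smul, dotProduct_smul] at this
    simpa [hc, smul_eq_mul] using this
  have hsum : lam + starRingEnd ℂ lam = 0 := by
    have : (lam + starRingEnd ℂ lam) * c = 0 := by linear_combination eq1
    rcases mul_eq_zero.mp this with h | h
    · exact h
    · exact absurd h hcne
  have eq2 : c + lam * d = -(starRingEnd ℂ lam) * d := by
    have := key z
    rw [hAz, Matrix.mulVec_add, Matrix.mulVec_smul, dotProduct_add,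
      dotProduct_smul] at this
    simpa [hc, hd, smul_eq_mul] using this
  have : c = 0 := by linear_combination eq2 - d * hsum
  exact hcne this
end

section
/- Let J ∈ ℝ^{n×n} be skew-symmetric, K ∈ ℝ^{m×n}, and D ∈ ℝ^{m×m} diagonal with positive entries. If M = Kᵀ D K J (equivalently the transpose of the Jacobian in the time-invariant H-DNN), then M is diagonalizable over ℂ provided Kᵀ D K is positive definite (K full column rank). -/
open Matrix

theorem KtDKJ_diagonalizable (m n : ℕ)
    (J : Matrix (Fin n) (Fin n) ℝ) (hJ : Jᵀ = -J)
    (K : Matrix (Fin m) (Fin n) ℝ)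
    (d : Fin m → ℝ) (hd : ∀ i, 0 < d i)
    (hP : (Kᵀ * Matrix.diagonal d * K).PosDef) :
    ∃ (S : Matrix (Fin n) (Fin n) ℂ) (e : Fin n → ℂ),
      IsUnit S ∧
      (Kᵀ * Matrix.diagonal d * K * J).map (Complex.ofReal)
        = S * Matrix.diagonal e * S⁻¹ := by
  set P := Kᵀ * Matrix.diagonal d * K with hPdef
  set Q := (open scoped MatrixOrder in CFC.sqrt P) with hQdef
  have hQQ : Q * Q = P := open scoped MatrixOrder in CFC.sqrt_mul_sqrt_self P hP.posSemidef.nonneg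
  have hQsym : Qᵀ = Q := open scoped MatrixOrder in (CFC.sqrt_nonneg P).posSemidef.isHermitian
  have hdetP : (0:ℝ) < P.det := hP.det_pos
  have hdetQ : Q.det ≠ 0 := by
    intro h
    have : P.det = 0 := by rw [← hQQ, det_mul, h, mul_zero]
    linarith
  set f : Matrix (Fin n) (Fin n) ℝ →+* Matrix (Fin n) (Fin n) ℂ :=
    Complex.ofRealHom.mapMatrix with hf
  have hmap : ∀ A : Matrix (Fin n) (Fin n) ℝ, A.map Complex.ofReal = f A := fun A => rfl
  set Qc := f Q with hQc
  set Jc := f J with hJc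
  set Bc := Qc * Jc * Qc with hBc
  have hdetQc : Qc.det ≠ 0 := by
    have : Qc.det = Complex.ofRealHom Q.det := (RingHom.map_det _ _).symm
    rw [this]
    simpa using hdetQ
  have hQcinv : Qc * Qc⁻¹ = 1 := mul_nonsing_inv _ (isUnit_iff_ne_zero.mpr hdetQc)
  have hQcH : Qcᴴ = Qc := by
    ext i j
    have h := congrFun (congrFun hQsym i) j
    simp only [transpose_apply] at h
    simp [hQc, hf, conjTranspose_apply, Matrix.map_apply, h]
  have hJcH : Jcᴴ = -Jc := by
    ext i j
    have h := congrFun (congrFun hJ i) j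
    simp only [transpose_apply, neg_apply] at h
    simp [hJc, hf, conjTranspose_apply, Matrix.map_apply, h]
  have hBcH : Bcᴴ = -Bc := by
    rw [hBc, conjTranspose_mul, conjTranspose_mul, hQcH, hJcH]
    noncomm_ring
  have hH : (Complex.I • Bc).IsHermitian := by
    unfold Matrix.IsHermitian
    rw [conjTranspose_smul, hBcH]
    simp [smul_smul]
  have hspec := hH.spectral_theorem
  rw [Unitary.conjStarAlgAut_apply] at hspec
  set U := (hH.eigenvectorUnitary : Matrix (Fin n) (Fin n) ℂ) with hU
  have hUunit : U ∈ Matrix.unitaryGroup (Fin n) ℂ := hH.eigenvectorUnitary.2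
  have hUinv : U⁻¹ = star U := inv_eq_left_inv (mem_unitaryGroup_iff'.mp hUunit)
  have hUU : U * star U = 1 := mem_unitaryGroup_iff.mp hUunit
  have hdetU : IsUnit U.det := by
    apply IsUnit.of_mul_eq_one (star U).det
    rw [← det_mul, hUU, det_one]
  set e0 : Fin n → ℂ := fun i => -Complex.I * (hH.eigenvalues i : ℂ) with he0
  have hBceq : Bc = U * Matrix.diagonal e0 * star U := by
    have h2 := congrArg (fun M => (-Complex.I) • M) hspec
    simp only [smul_smul] at h2
    rw [show -Complex.I * Complex.I = 1 by simp, one_smul] at h2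
    rw [h2, ← Matrix.smul_mul, ← Matrix.mul_smul, ← Matrix.diagonal_smul]
    have hdg : (-Complex.I) • (RCLike.ofReal ∘ hH.eigenvalues : Fin n → ℂ) = e0 := by
      ext i; simp [he0, Function.comp]
    rw [hdg]
  refine ⟨Qc * U, e0, ?_, ?_⟩
  · exact (isUnit_iff_isUnit_det _).mpr
      (by rw [det_mul]; exact (isUnit_iff_ne_zero.mpr hdetQc).mul hdetU)
  · have hSinv : (Qc * U)⁻¹ = star U * Qc⁻¹ := by rw [Matrix.mul_inv_rev, hUinv]
    have hPJ : (P * J).map Complex.ofReal = Qc * Qc * Jc := by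
      have h1 : P * J = Q * Q * J := by rw [hQQ]
      rw [hmap, h1, f.map_mul, f.map_mul]
    rw [hSinv, hPJ]
    have key : Qc * Qc * Jc = Qc * Bc * Qc⁻¹ := by
      rw [hBc]
      calc Qc * Qc * Jc = Qc * Qc * Jc * (Qc * Qc⁻¹) := by rw [hQcinv, mul_one]
        _ = Qc * (Qc * Jc * Qc) * Qc⁻¹ := by noncomm_ring
    rw [key, hBceq]
    noncomm_ring
end
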